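/- For all n ≥ 1 and k ≥ 0, c_n^{(k)} = (-1)^k · (n/k!) · ∫_0^1 x^{n-1} (ln(1-x))^k dx. -/

import Mathlib

open MeasureTheory

open Real Set Filter

lemma aux_integrable (i k : ℕ) :
    IntervalIntegrable (fun x : ℝ => x ^ i * Real.log x ^ k) volume 0 1 := by
  rcases Nat.eq_zero_or_pos k with hk | hk
  · subst hk; simpa using (continuous_pow i).intervalIntegrable 0 1
  rw [intervalIntegrable_iff_integrableOn_Ioc_of_le zero_le_one]
  have hg : IntegrableOn (fun x : ℝ => (2*k : ℝ)^k * x ^ (-(1/2) : ℝ)) (Ioc 0 1) := by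
    apply Integrable.const_mul
    have := intervalIntegral.intervalIntegrable_rpow' (a := 0) (b := 1) (r := -(1/2)) (by norm_num)
    rwa [intervalIntegrable_iff_integrableOn_Ioc_of_le zero_le_one] at this
  refine hg.mono' ?_ ?_
  · exact ((measurable_id.pow_const i).mul
      (Real.measurable_log.pow_const k)).aestronglyMeasurable
  · rw [ae_restrict_iff' measurableSet_Ioc]
    filter_upwards with x hx
    obtain ⟨hx0, hx1⟩ := hx
    have hk' : (0:ℝ) < k := by exact_mod_cast hk
    have ht : (0:ℝ) < (2*(k:ℝ))⁻¹ := by positivity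
    have h1 : |Real.log x * x ^ (2*(k:ℝ))⁻¹| ≤ 2*k := by
      have := Real.abs_log_mul_self_rpow_lt x (2*(k:ℝ))⁻¹ hx0 hx1 ht
      rw [one_div, inv_inv] at this
      exact this.le
    have h2 : |Real.log x| ^ k * x ^ ((1:ℝ)/2) ≤ (2*k:ℝ)^k := by
      have hp := pow_le_pow_left₀ (abs_nonneg _) h1 k
      rw [abs_mul, mul_pow, abs_of_nonneg (Real.rpow_nonneg hx0.le _),
        ← Real.rpow_natCast (x ^ (2*(k:ℝ))⁻¹) k, ← Real.rpow_mul hx0.le] at hp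
      have : (2*(k:ℝ))⁻¹ * k = 1/2 := by field_simp
      rwa [this] at hp
    have hxr : (0:ℝ) < x ^ ((1:ℝ)/2) := Real.rpow_pos_of_pos hx0 _
    have h3 : |Real.log x| ^ k ≤ (2*k:ℝ)^k * x ^ (-(1/2) : ℝ) := by
      rw [Real.rpow_neg hx0.le, mul_comm ((2*k:ℝ)^k)]
      rw [← le_div_iff₀ hxr] at h2
      rwa [div_eq_inv_mul] at h2
    calc ‖x ^ i * Real.log x ^ k‖ = |x| ^ i * |Real.log x| ^ k := by
          rw [norm_mul, norm_pow, norm_pow]; rfl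
      _ ≤ 1 * ((2*k:ℝ)^k * x ^ (-(1/2) : ℝ)) := by
          apply mul_le_mul _ h3 (by positivity) zero_le_one
          exact pow_le_one₀ (abs_nonneg _) (abs_le.2 ⟨by linarith, hx1⟩)
      _ = (2*k:ℝ)^k * x ^ (-(1/2) : ℝ) := one_mul _

lemma aux_integral (i : ℕ) : ∀ k : ℕ,
    ∫ x in (0:ℝ)..1, x ^ i * Real.log x ^ k
      = (-1:ℝ)^k * (Nat.factorial k) / (i+1)^(k+1) := by
  intro k
  induction k with
  | zero => simp [integral_pow]
  | succ k ih =>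
    have hi : ((i:ℝ)+1) ≠ 0 := by positivity
    have key : ∫ x in (0:ℝ)..1,
        (x^i * Real.log x^(k+1) + ((k+1:ℝ)/(i+1)) * (x^i * Real.log x^k))
        = 0 - 0 := by
      apply intervalIntegral.integral_eq_sub_of_hasDerivAt_of_tendsto
        (f := fun x => x^(i+1) * Real.log x ^ (k+1) / (i+1)) zero_lt_one
      · intro x hx
        have hx0 : x ≠ 0 := ne_of_gt hx.1
        have h := ((hasDerivAt_pow (i+1) x).mul
          ((Real.hasDerivAt_log hx0).pow (k+1))).div_const ((i:ℝ)+1)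
        convert h using 1
        · rfl
        · rfl
        simp only [Pi.pow_apply, Nat.add_sub_cancel]
        push_cast
        field_simp
        ring
      · exact (aux_integrable i (k+1)).add ((aux_integrable i k).const_mul _)
      · -- tendsto at 0+
        have h0 : Tendsto (fun x : ℝ => Real.log x * x ^ (((i:ℝ)+1)/(k+1)))
            (nhdsWithin 0 (Set.Ioi 0)) (nhds 0) :=
          tendsto_log_mul_rpow_nhdsGT_zero (by positivity)
        have h1 : Tendsto (fun x : ℝ => (Real.log x * x ^ (((i:ℝ)+1)/(k+1)))^(k+1) / ((i:ℝ)+1))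
            (nhdsWithin 0 (Set.Ioi 0)) (nhds 0) := by
          have := (h0.pow (k+1)).div_const ((i:ℝ)+1)
          simpa using this
        apply h1.congr'
        filter_upwards [self_mem_nhdsWithin] with x (hx : 0 < x)
        rw [mul_pow, ← Real.rpow_natCast (x ^ _), ← Real.rpow_mul hx.le]
        have h2 : ((i:ℝ)+1)/((k:ℝ)+1) * ((k:ℝ)+1) = ((i+1:ℕ):ℝ) := by push_cast; field_simp
        push_cast
        rw [h2, Real.rpow_natCast]
        ring
      · -- tendsto at 1-
        have hc : ContinuousAt (fun x : ℝ => x^(i+1) * Real.log x ^ (k+1) / (i+1)) 1 :=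
          (((continuous_pow (i+1)).continuousAt).mul
            ((Real.continuousAt_log one_ne_zero).pow (k+1))).div_const _
        have := hc.tendsto.mono_left (nhdsWithin_le_nhds (s := Set.Iio 1))
        simpa using this
    rw [intervalIntegral.integral_add (aux_integrable i (k+1))
      ((aux_integrable i k).const_mul _), intervalIntegral.integral_const_mul, ih] at key
    have hik : ((i:ℝ)+1)^(k+1) ≠ 0 := by positivity
    have : (∫ x in (0:ℝ)..1, x ^ i * Real.log x ^ (k+1))
        = - (((k:ℝ)+1)/(i+1) * ((-1:ℝ)^k * (Nat.factorial k) / (i+1)^(k+1))) := by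
      linarith [key]
    rw [this]
    rw [Nat.factorial_succ]
    push_cast
    field_simp
    ring

/-- Roman harmonic number `c_n^{(k)}` as a real number. -/
noncomputable def romanHarmonic (n k : ℕ) : ℝ :=
  ∑ j ∈ Finset.Icc 1 n, (-1 : ℝ) ^ (j - 1) * (n.choose j) / (j : ℝ) ^ k

theorem roman_harmonic_integral_repr (n k : ℕ) (hn : 1 ≤ n) :
    romanHarmonic n k =
      (-1 : ℝ) ^ k * ((n : ℝ) / (Nat.factorial k : ℝ)) *
        ∫ x in (0:ℝ)..1, x ^ (n - 1) * (Real.log (1 - x)) ^ k := by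
  -- Step 1: substitution x ↦ 1 - x
  have hsub : (∫ x in (0:ℝ)..1, x ^ (n-1) * (Real.log (1-x)) ^ k)
      = ∫ x in (0:ℝ)..1, (1-x)^(n-1) * Real.log x ^ k := by
    have := intervalIntegral.integral_comp_sub_left (a := 0) (b := 1)
      (fun u : ℝ => (1-u)^(n-1) * Real.log u ^ k) 1
    norm_num at this
    rw [← this]
  rw [hsub]
  -- Step 2: binomial expansion of (1-x)^(n-1)
  have hexp : (∫ x in (0:ℝ)..1, (1-x)^(n-1) * Real.log x ^ k)
      = ∑ i ∈ Finset.range n,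
          ((-1:ℝ)^i * ((n-1).choose i)) * ((-1:ℝ)^k * (Nat.factorial k) / (i+1)^(k+1)) := by
    have h1 : ∀ x : ℝ, (1-x)^(n-1) * Real.log x ^ k
        = ∑ i ∈ Finset.range n, ((-1:ℝ)^i * ((n-1).choose i)) * (x^i * Real.log x ^ k) := by
      intro x
      rw [sub_eq_add_neg, add_comm, add_pow]
      rw [show n - 1 + 1 = n from Nat.succ_pred_eq_of_pos hn]
      rw [Finset.sum_mul]
      apply Finset.sum_congr rfl
      intro i _
      rw [neg_pow]
      ring
    simp_rw [h1]
    rw [intervalIntegral.integral_finset_sum]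
    · apply Finset.sum_congr rfl
      intro i _
      rw [intervalIntegral.integral_const_mul, aux_integral i k]
    · intro i _
      exact (aux_integrable i k).const_mul _
  rw [hexp, romanHarmonic]
  -- Step 3: finite sum identity
  rw [← Finset.Ico_add_one_right_eq_Icc, Finset.sum_Ico_eq_sum_range,
    show n + 1 - 1 = n from rfl, Finset.mul_sum]
  apply Finset.sum_congr rfl
  intro i _
  have hfac : (Nat.factorial k : ℝ) ≠ 0 := by positivity
  have hi1 : ((i:ℝ)+1) ≠ 0 := by positivity
  have hik : ((i:ℝ)+1)^k ≠ 0 := by positivity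
  have hch : (n:ℝ) * ((n-1).choose i) = ((i:ℝ)+1) * (n.choose (i+1)) := by
    have h := Nat.add_one_mul_choose_eq (n-1) i
    have h' : n - 1 + 1 = n := Nat.succ_pred_eq_of_pos hn
    simp only [Nat.succ_eq_add_one, h'] at h
    have := congrArg (Nat.cast (R := ℝ)) h
    push_cast at this
    linarith [this]
  have hsq : ((-1:ℝ)^k) * ((-1:ℝ)^k) = 1 := by
    rw [← pow_add]; exact Even.neg_one_pow ⟨k, rfl⟩
  have e1 : 1 + i - 1 = i := by omega
  have e2 : 1 + i = i + 1 := by omega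
  rw [e1, e2]
  push_cast
  have hmid : (-1:ℝ)^i * (n.choose (i+1)) / ((i:ℝ)+1)^k
      = (-1:ℝ)^i * (n.choose (i+1)) * ((i:ℝ)+1) / (((i:ℝ)+1)^k * ((i:ℝ)+1))
        * ((-1:ℝ)^k*(-1)^k) * ((k.factorial:ℝ)/k.factorial) := by
    rw [hsq, div_self hfac, mul_div_mul_right _ _ hi1]; ring
  rw [hmid]
  linear_combination (-((-1:ℝ)^i*((-1:ℝ)^k*(-1)^k)/((i:ℝ)+1)^(k+1)*((k.factorial:ℝ)/k.factorial))) * hch
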